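/- Let m ≥ 1 be an integer and let H be a subharmonic real-valued homogeneous polynomial of degree 2m containing no harmonic terms with ‖H‖ = 1. Let η_n ∈ M_H with η_n → (0,0), and suppose there are constants c, C > 0 with c|η_{n,1}|^{2m} ≤ ε(η_n) ≤ C|η_{n,1}|^{2m} for all n. Then: (a) there exist constants c′, C′ > 0 with c′ ε(η_n)^{1/(2m)} ≤ τ(η_n) ≤ C′ ε(η_n)^{1/(2m)} for all n; (b) if moreover η_{n,1}/ε(η_n)^{1/(2m)} → α ∈ ℂ and τ(η_n)/ε(η_n)^{1/(2m)} → β ∈ ℝ as n → ∞, then β > 0 and for all integers j, q ≥ 1 with j+q ≤ 2m the coefficient H_{j,q̄}(η_{n,1}) τ(η_n)^{j+q}/(j! q! ε(η_n)) converges to β^{j+q} H_{j,q̄}(α)/(j! q!); consequently, for every w ∈ ℂ, H_{η_n}(w) converges to H_∞(w) := H(α + βw) − H(α) − 2Re(Σ_{j=1}^{2m−1} (H_j(α)/j!) (βw)^j), H_∞ is a polynomial of degree exactly 2m, and M_{H_∞} = {(z₁,z₂) : Re z₂ + H_∞(z₁) < 0} is biholomorphically equivalent to M_H. -/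

import Mathlib

open Complex Finset Metric Filter Topology Asymptotics
open scoped ENNReal NNReal

noncomputable section

/-- `Hpoly m a z = Σ_{j=1}^{2m-1} a_{2m-j} z^j conj(z)^{2m-j}`. -/
def Hpoly (m : ℕ) (a : ℕ → ℂ) (z : ℂ) : ℂ :=
  ∑ j ∈ Finset.Icc 1 (2 * m - 1), a (2 * m - j) * z ^ j * (starRingEnd ℂ z) ^ (2 * m - j)

/-- The coefficients `a` give a real-valued polynomial that is not identically zero. -/
def GoodCoeff (m : ℕ) (a : ℕ → ℂ) : Prop :=
  (∀ j ∈ Finset.Icc 1 (2 * m - 1), a j = starRingEnd ℂ (a (2 * m - j))) ∧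
  (∃ j ∈ Finset.Icc 1 (2 * m - 1), a j ≠ 0)

/-- Subharmonicity: the Laplacian is a nonnegative real number at every point. -/
def SubharmonicCoeff (m : ℕ) (a : ℕ → ℂ) : Prop :=
  ∀ z : ℂ,
    ((4 : ℂ) * ∑ j ∈ Finset.Icc 1 (2 * m - 1),
      (j : ℂ) * ((2 * m - j : ℕ) : ℂ) * a (2 * m - j) * z ^ (j - 1) *
        (starRingEnd ℂ z) ^ (2 * m - j - 1)).im = 0 ∧
    0 ≤ ((4 : ℂ) * ∑ j ∈ Finset.Icc 1 (2 * m - 1),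
      (j : ℂ) * ((2 * m - j : ℕ) : ℂ) * a (2 * m - j) * z ^ (j - 1) *
        (starRingEnd ℂ z) ^ (2 * m - j - 1)).re

/-- The model domain `M_H`. -/
def modelM (H : ℂ → ℝ) : Set (ℂ × ℂ) := {z : ℂ × ℂ | z.2.re + H z.1 < 0}

/-- The tube domain `Ω_m`. -/
def OmegaM (m : ℕ) : Set (ℂ × ℂ) := {z : ℂ × ℂ | z.2.re + z.1.re ^ (2 * m) < 0}

/-- `f` is a biholomorphism from `Ω₁` onto `Ω₂`. -/
def IsBiholoOn (Ω₁ Ω₂ : Set (ℂ × ℂ)) (f : ℂ × ℂ → ℂ × ℂ) : Prop :=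
  DifferentiableOn ℂ f Ω₁ ∧ Set.MapsTo f Ω₁ Ω₂ ∧
    ∃ g : ℂ × ℂ → ℂ × ℂ, DifferentiableOn ℂ g Ω₂ ∧ Set.MapsTo g Ω₂ Ω₁ ∧
      (∀ z ∈ Ω₁, g (f z) = z) ∧ (∀ w ∈ Ω₂, f (g w) = w)

/-- `f` is an automorphism of `Ω`. -/
def IsAutomorphismOf (Ω : Set (ℂ × ℂ)) (f : ℂ × ℂ → ℂ × ℂ) : Prop :=
  IsBiholoOn Ω Ω f

/-- Mixed Wirtinger derivative `H_{j,q̄}`. -/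
def Hmix (m : ℕ) (a : ℕ → ℂ) (j q : ℕ) (z : ℂ) : ℂ :=
  ∑ k ∈ (Finset.Icc j (2 * m - 1)).filter (fun k => q ≤ 2 * m - k),
    a (2 * m - k) * (k.descFactorial j : ℂ) * ((2 * m - k).descFactorial q : ℂ) *
      z ^ (k - j) * (starRingEnd ℂ z) ^ (2 * m - k - q)

/-- Holomorphic Wirtinger derivative `H_j`. -/
def Hhol (m : ℕ) (a : ℕ → ℂ) (j : ℕ) (z : ℂ) : ℂ :=
  ∑ k ∈ Finset.Icc j (2 * m - 1),
    a (2 * m - k) * (k.descFactorial j : ℂ) * z ^ (k - j) * (starRingEnd ℂ z) ^ (2 * m - k)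

/-- `ε(a) = |Re a₂ + H(a₁)|`. -/
def epsAt (H : ℂ → ℝ) (p : ℂ × ℂ) : ℝ := |p.2.re + H p.1|

/-- The `(j,q)` coefficient of the rescaled polynomial `H_{a,τ}`. -/
def scaledCoeff (m : ℕ) (a : ℕ → ℂ) (H : ℂ → ℝ) (p : ℂ × ℂ) (τ : ℝ) (j q : ℕ) : ℂ :=
  Hmix m a j q p.1 * (τ : ℂ) ^ (j + q) /
    ((j.factorial : ℂ) * (q.factorial : ℂ) * (epsAt H p : ℂ))

/-- Index pairs `(j,q)` with `j, q ≥ 1` and `j + q ≤ 2m`. -/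
def coeffPairs (m : ℕ) : Finset (ℕ × ℕ) :=
  (Finset.Icc 1 (2 * m) ×ˢ Finset.Icc 1 (2 * m)).filter (fun jq => jq.1 + jq.2 ≤ 2 * m)

/-- `‖H_{a,τ}‖`, the maximum modulus of the coefficients of the rescaled polynomial. -/
def HscaledNorm (m : ℕ) (a : ℕ → ℂ) (H : ℂ → ℝ) (p : ℂ × ℂ) (τ : ℝ) : ℝ :=
  (((coeffPairs m).sup fun jq =>
    Real.toNNReal ‖scaledCoeff m a H p τ jq.1 jq.2‖) : ℝ≥0)

/-- Vanishing order at `0 ∈ ℂ` of a map, via big-O estimates. -/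
def vOrder {E : Type*} [NormedAddCommGroup E] (u : ℂ → E) : ℝ≥0∞ :=
  sSup {c : ℝ≥0∞ | ∃ k : ℕ, c = (k : ℝ≥0∞) ∧ u =O[𝓝 (0 : ℂ)] fun z : ℂ => ‖z‖ ^ k}

/-- The D'Angelo type of `∂M_H` at `p`. -/
def dAngeloType (H : ℂ → ℝ) (p : ℂ × ℂ) : ℝ≥0∞ :=
  ⨆ (γ : ℂ → ℂ × ℂ) (_ : ∃ r > 0, DifferentiableOn ℂ γ (Metric.ball 0 r) ∧
      γ 0 = p ∧ ¬ ∀ z ∈ Metric.ball (0 : ℂ) r, γ z = p),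
    vOrder (fun t => ((γ t).2.re + H (γ t).1 : ℝ)) / vOrder (fun t => γ t - p)


def coefAux (m : ℕ) (a : ℕ → ℂ) (z : ℂ) (j q : ℕ) : ℂ :=
  ∑ k ∈ Finset.Icc 1 (2 * m - 1),
    a (2 * m - k) * (k.choose j : ℂ) * ((2 * m - k).choose q : ℂ) *
      z ^ (k - j) * (starRingEnd ℂ z) ^ (2 * m - k - q)

theorem taylor_expand (m : ℕ) (a : ℕ → ℂ) (z u : ℂ) :
    Hpoly m a (z + u) = ∑ j ∈ Finset.range (2*m+1), ∑ q ∈ Finset.range (2*m+1),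
      coefAux m a z j q * u ^ j * (starRingEnd ℂ u) ^ q := by
  have hswap : ∀ (f : ℕ → ℕ → ℕ → ℂ),
      (∑ j ∈ Finset.range (2*m+1), ∑ q ∈ Finset.range (2*m+1), ∑ k ∈ Finset.Icc 1 (2*m-1), f j q k)
      = ∑ k ∈ Finset.Icc 1 (2*m-1), ∑ j ∈ Finset.range (2*m+1), ∑ q ∈ Finset.range (2*m+1), f j q k := by
    intro f
    exact (Finset.sum_congr rfl fun j _ => Finset.sum_comm).trans Finset.sum_comm
  unfold Hpoly coefAux
  simp only [Finset.sum_mul]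
  rw [hswap]
  refine Finset.sum_congr rfl fun k hk => ?_
  simp only [Finset.mem_Icc] at hk
  have hk1 : k + 1 ≤ 2*m + 1 := by omega
  have hk2 : 2*m - k + 1 ≤ 2*m + 1 := by omega
  have e1 : (z + u) ^ k = ∑ j ∈ Finset.range (2*m+1), u ^ j * z ^ (k - j) * (k.choose j : ℂ) := by
    rw [add_comm z u, add_pow]
    refine Finset.sum_subset (Finset.range_subset_range.2 hk1) ?_
    intro j _ hj
    simp only [Finset.mem_range, not_lt] at hj
    rw [Nat.choose_eq_zero_of_lt (by omega)]
    simp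
  have e2 : (starRingEnd ℂ (z + u)) ^ (2*m - k) = ∑ q ∈ Finset.range (2*m+1),
      (starRingEnd ℂ u) ^ q * (starRingEnd ℂ z) ^ (2*m - k - q) * ((2*m - k).choose q : ℂ) := by
    rw [map_add, add_comm, add_pow]
    refine Finset.sum_subset (Finset.range_subset_range.2 hk2) ?_
    intro q _ hq
    simp only [Finset.mem_range, not_lt] at hq
    rw [Nat.choose_eq_zero_of_lt (by omega)]
    simp
  rw [e1, e2]
  simp only [Finset.mul_sum, Finset.sum_mul]
  rw [Finset.sum_comm]
  exact Finset.sum_congr rfl fun j _ => Finset.sum_congr rfl fun q _ => by ring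

theorem hmix_coefAux (m : ℕ) (a : ℕ → ℂ) (z : ℂ) (j q : ℕ) (hj : 1 ≤ j) :
    Hmix m a j q z = coefAux m a z j q * (j.factorial : ℂ) * (q.factorial : ℂ) := by
  unfold Hmix coefAux
  rw [Finset.sum_mul, Finset.sum_mul]
  refine Finset.sum_subset ?_ ?_ |>.symm.trans (Finset.sum_congr rfl fun k hk => ?_) |>.symm
  · intro k hk
    simp only [Finset.mem_filter, Finset.mem_Icc] at hk ⊢
    omega
  · intro k hk hk2
    simp only [Finset.mem_filter, Finset.mem_Icc, not_and, not_le] at hk hk2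
    rcases Nat.lt_or_ge k j with h | h
    · rw [Nat.choose_eq_zero_of_lt h]; ring
    · rw [Nat.choose_eq_zero_of_lt (hk2 ⟨h, hk.2⟩)]; ring
  · simp only [Finset.mem_filter, Finset.mem_Icc] at hk
    rw [Nat.descFactorial_eq_factorial_mul_choose k j, Nat.descFactorial_eq_factorial_mul_choose (2*m-k) q]
    push_cast
    ring

theorem coefAux_zero_zero (m : ℕ) (a : ℕ → ℂ) (z : ℂ) : coefAux m a z 0 0 = Hpoly m a z := by
  unfold coefAux Hpoly
  refine Finset.sum_congr rfl fun k hk => ?_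
  simp

theorem hhol_coefAux (m : ℕ) (a : ℕ → ℂ) (z : ℂ) (j : ℕ) (hj : 1 ≤ j) :
    Hhol m a j z = coefAux m a z j 0 * (j.factorial : ℂ) := by
  have h1 : Hmix m a j 0 z = Hhol m a j z := by
    unfold Hmix Hhol
    rw [Finset.filter_true_of_mem (fun k _ => Nat.zero_le _)]
    exact Finset.sum_congr rfl fun k hk => by simp
  have := hmix_coefAux m a z j 0 hj
  rw [h1] at this
  simpa using this

theorem coefAux_conj (m : ℕ) (a : ℕ → ℂ)
    (hre : ∀ j ∈ Finset.Icc 1 (2 * m - 1), a j = starRingEnd ℂ (a (2 * m - j)))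
    (z : ℂ) (q : ℕ) :
    coefAux m a z 0 q = starRingEnd ℂ (coefAux m a z q 0) := by
  unfold coefAux
  rw [map_sum]
  refine Finset.sum_nbij' (fun k => 2*m - k) (fun k => 2*m - k) ?_ ?_ ?_ ?_ ?_
  · intro k hk; simp only [Finset.mem_Icc] at hk ⊢; omega
  · intro k hk; simp only [Finset.mem_Icc] at hk ⊢; omega
  · intro k hk; simp only [Finset.mem_Icc] at hk; omega
  · intro k hk; simp only [Finset.mem_Icc] at hk; omega
  · intro k hk
    simp only [Finset.mem_Icc] at hk
    have h1 : 2*m - (2*m - k) = k := by omega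
    have h2 : a (2*m - k) = starRingEnd ℂ (a k) := by
      have := hre (2*m - k) (by simp only [Finset.mem_Icc]; omega)
      rwa [h1] at this
    simp only [map_mul, map_pow, Complex.conj_conj, map_natCast, h1, Nat.sub_zero, h2]
    ring

theorem coefAux_zero_of_big (m : ℕ) (a : ℕ → ℂ) (z : ℂ) (j q : ℕ) (h : 2*m < j + q) :
    coefAux m a z j q = 0 := by
  unfold coefAux
  refine Finset.sum_eq_zero fun k hk => ?_
  simp only [Finset.mem_Icc] at hk
  rcases Nat.lt_or_ge k j with h1 | h1
  · rw [Nat.choose_eq_zero_of_lt h1]; ring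
  · rw [Nat.choose_eq_zero_of_lt (show 2*m - k < q by omega)]; ring

theorem coefAux_zero_of_j_big (m : ℕ) (a : ℕ → ℂ) (z : ℂ) (j q : ℕ) (h : 2*m - 1 < j) :
    coefAux m a z j q = 0 := by
  unfold coefAux
  refine Finset.sum_eq_zero fun k hk => ?_
  simp only [Finset.mem_Icc] at hk
  rw [Nat.choose_eq_zero_of_lt (show k < j by omega)]; ring

theorem coefAux_zero_of_q_big (m : ℕ) (a : ℕ → ℂ) (z : ℂ) (j q : ℕ) (h : 2*m - 1 < q) :
    coefAux m a z j q = 0 := by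
  unfold coefAux
  refine Finset.sum_eq_zero fun k hk => ?_
  simp only [Finset.mem_Icc] at hk
  rw [Nat.choose_eq_zero_of_lt (show 2*m - k < q by omega)]; ring

/-- Master Taylor identity. -/

theorem master_identity (m : ℕ) (hm : 1 ≤ m) (a : ℕ → ℂ)
    (hre : ∀ j ∈ Finset.Icc 1 (2 * m - 1), a j = starRingEnd ℂ (a (2 * m - j)))
    (z u : ℂ) :
    Hpoly m a (z + u) = Hpoly m a z
      + (∑ j ∈ Finset.Icc 1 (2*m - 1), Hhol m a j z / (j.factorial : ℂ) * u ^ j)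
      + starRingEnd ℂ (∑ j ∈ Finset.Icc 1 (2*m - 1), Hhol m a j z / (j.factorial : ℂ) * u ^ j)
      + ∑ jq ∈ coeffPairs m, Hmix m a jq.1 jq.2 z / ((jq.1.factorial : ℂ) * (jq.2.factorial : ℂ))
          * u ^ jq.1 * (starRingEnd ℂ u) ^ jq.2 := by
  have hS : ∀ j ∈ Finset.Icc 1 (2*m), Hhol m a j z / (j.factorial : ℂ) * u ^ j
      = coefAux m a z j 0 * u ^ j := by
    intro j hj
    simp only [Finset.mem_Icc] at hj
    rw [hhol_coefAux m a z j hj.1, mul_div_assoc,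
      div_self (show ((j.factorial : ℂ)) ≠ 0 by exact_mod_cast j.factorial_ne_zero), mul_one]
  have hQ : ∀ jq ∈ coeffPairs m,
      Hmix m a jq.1 jq.2 z / ((jq.1.factorial : ℂ) * (jq.2.factorial : ℂ)) * u ^ jq.1 * (starRingEnd ℂ u) ^ jq.2
      = coefAux m a z jq.1 jq.2 * u ^ jq.1 * (starRingEnd ℂ u) ^ jq.2 := by
    intro jq hjq
    simp only [coeffPairs, Finset.mem_filter, Finset.mem_product, Finset.mem_Icc] at hjq
    rw [hmix_coefAux m a z jq.1 jq.2 hjq.1.1.1]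
    have h1 : ((jq.1.factorial : ℂ)) ≠ 0 := by exact_mod_cast jq.1.factorial_ne_zero
    have h2 : ((jq.2.factorial : ℂ)) ≠ 0 := by exact_mod_cast jq.2.factorial_ne_zero
    field_simp
  rw [taylor_expand]
  have hsplit : Finset.range (2*m+1) = insert 0 (Finset.Icc 1 (2*m)) := by
    ext x; simp only [Finset.mem_range, Finset.mem_insert, Finset.mem_Icc]; omega
  have h0 : (0:ℕ) ∉ Finset.Icc 1 (2*m) := by simp
  rw [hsplit]
  rw [Finset.sum_insert h0]
  -- inner sum at j = 0
  rw [Finset.sum_insert h0]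
  have e00 : coefAux m a z 0 0 * u ^ 0 * (starRingEnd ℂ u) ^ 0 = Hpoly m a z := by
    rw [coefAux_zero_zero]; ring
  -- j = 0, q ≥ 1 part equals conj S
  have e0q : ∑ q ∈ Finset.Icc 1 (2*m), coefAux m a z 0 q * u ^ 0 * (starRingEnd ℂ u) ^ q
      = starRingEnd ℂ (∑ j ∈ Finset.Icc 1 (2*m - 1), Hhol m a j z / (j.factorial : ℂ) * u ^ j) := by
    rw [map_sum]
    have hext : ∑ j ∈ Finset.Icc 1 (2*m - 1),
        starRingEnd ℂ (Hhol m a j z / (j.factorial : ℂ) * u ^ j)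
        = ∑ j ∈ Finset.Icc 1 (2*m), starRingEnd ℂ (Hhol m a j z / (j.factorial : ℂ) * u ^ j) := by
      refine Finset.sum_subset ?_ ?_
      · intro x hx; simp only [Finset.mem_Icc] at hx ⊢; omega
      · intro x hx hx2
        simp only [Finset.mem_Icc] at hx hx2
        have hx1 : 1 ≤ x := hx.1
        have : x = 2*m := by omega
        subst this
        rw [hS (2*m) (by simp only [Finset.mem_Icc]; omega),
          coefAux_zero_of_j_big m a z (2*m) 0 (by omega)]
        simp
    rw [hext]
    refine Finset.sum_congr rfl fun q hq => ?_
    simp only [Finset.mem_Icc] at hq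
    rw [hS q (by simp only [Finset.mem_Icc]; omega)]
    rw [map_mul, map_pow, ← coefAux_conj m a hre z q]
    ring
  -- j ≥ 1, q = 0 part equals S
  have ej0 : ∑ j ∈ Finset.Icc 1 (2*m), coefAux m a z j 0 * u ^ j * (starRingEnd ℂ u) ^ 0
      = ∑ j ∈ Finset.Icc 1 (2*m - 1), Hhol m a j z / (j.factorial : ℂ) * u ^ j := by
    rw [Finset.sum_congr rfl fun j hj => by rw [← hS j hj, pow_zero, mul_one]]
    refine (Finset.sum_subset ?_ ?_).symm
    · intro x hx; simp only [Finset.mem_Icc] at hx ⊢; omega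
    · intro x hx hx2
      simp only [Finset.mem_Icc] at hx hx2
      have : x = 2*m := by omega
      subst this
      rw [hS (2*m) (by simp only [Finset.mem_Icc]; omega),
        coefAux_zero_of_j_big m a z (2*m) 0 (by omega)]
      simp
  -- j ≥ 1, q ≥ 1 part equals Q
  have ejq : ∑ j ∈ Finset.Icc 1 (2*m), ∑ q ∈ Finset.Icc 1 (2*m),
      coefAux m a z j q * u ^ j * (starRingEnd ℂ u) ^ q
      = ∑ jq ∈ coeffPairs m, coefAux m a z jq.1 jq.2 * u ^ jq.1 * (starRingEnd ℂ u) ^ jq.2 := by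
    rw [← Finset.sum_product']
    unfold coeffPairs
    rw [← Finset.sum_filter_add_sum_filter_not (Finset.Icc 1 (2*m) ×ˢ Finset.Icc 1 (2*m))
      (fun jq => jq.1 + jq.2 ≤ 2*m)]
    have : ∑ jq ∈ (Finset.Icc 1 (2*m) ×ˢ Finset.Icc 1 (2*m)).filter (fun jq => ¬ jq.1 + jq.2 ≤ 2*m),
        coefAux m a z jq.1 jq.2 * u ^ jq.1 * (starRingEnd ℂ u) ^ jq.2 = 0 := by
      refine Finset.sum_eq_zero fun jq hjq => ?_
      simp only [Finset.mem_filter, Finset.mem_product, Finset.mem_Icc, not_le] at hjq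
      rw [coefAux_zero_of_big m a z jq.1 jq.2 hjq.2]
      ring
    rw [this, add_zero]
  -- assemble
  have esplit : ∀ j ∈ Finset.Icc 1 (2*m),
      (coefAux m a z j 0 * u ^ j * (starRingEnd ℂ u) ^ 0
       + ∑ q ∈ Finset.Icc 1 (2*m), coefAux m a z j q * u ^ j * (starRingEnd ℂ u) ^ q)
      = ∑ q ∈ insert 0 (Finset.Icc 1 (2*m)), coefAux m a z j q * u ^ j * (starRingEnd ℂ u) ^ q := by
    intro j _
    rw [Finset.sum_insert h0]
  rw [← Finset.sum_congr rfl esplit, Finset.sum_add_distrib, e00, e0q, ej0, ejq]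
  rw [Finset.sum_congr rfl (fun jq hjq => (hQ jq hjq).symm)]
  ring

theorem hmix_homog (m : ℕ) (a : ℕ → ℂ) (j q : ℕ) (t : ℝ) (z : ℂ) :
    Hmix m a j q ((t:ℂ) * z) = (t:ℂ) ^ (2*m - j - q) * Hmix m a j q z := by
  unfold Hmix
  rw [Finset.mul_sum]
  refine Finset.sum_congr rfl fun k hk => ?_
  simp only [Finset.mem_filter, Finset.mem_Icc] at hk
  rw [map_mul, Complex.conj_ofReal, mul_pow, mul_pow]
  have h1 : (k - j) + (2*m - k - q) = 2*m - j - q := by omega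
  rw [show (t:ℂ)^(2*m-j-q) = (t:ℂ)^(k-j) * (t:ℂ)^(2*m-k-q) by rw [← pow_add, h1]]
  ring

theorem hmix_top (m : ℕ) (a : ℕ → ℂ) (j0 : ℕ) (hj0 : j0 ∈ Finset.Icc 1 (2*m-1)) (hm : 1 ≤ m)
    (z : ℂ) :
    Hmix m a (2*m - j0) j0 z = a j0 * (((2*m - j0).factorial : ℕ) : ℂ) * ((j0.factorial : ℕ) : ℂ) := by
  simp only [Finset.mem_Icc] at hj0
  unfold Hmix
  have hset : (Finset.Icc (2*m - j0) (2*m-1)).filter (fun k => j0 ≤ 2*m - k) = {2*m - j0} := by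
    ext k
    simp only [Finset.mem_filter, Finset.mem_Icc, Finset.mem_singleton]
    omega
  rw [hset, Finset.sum_singleton]
  have h1 : 2*m - (2*m - j0) = j0 := by omega
  have h2 : 2*m - j0 - (2*m - j0) = 0 := by omega
  rw [h1, h2, Nat.sub_self, Nat.descFactorial_self, Nat.descFactorial_self]
  simp

theorem hmix_continuous (m : ℕ) (a : ℕ → ℂ) (j q : ℕ) : Continuous (Hmix m a j q) := by
  unfold Hmix
  refine continuous_finset_sum _ fun k _ => ?_
  exact (continuous_const.mul (continuous_pow _)).mul (Complex.continuous_conj.pow _)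

theorem hmix_bound (m : ℕ) (a : ℕ → ℂ) (j q : ℕ) (hj : 1 ≤ j)
    (ha : ∀ k ∈ Finset.Icc 1 (2*m-1), ‖a k‖ ≤ 1) (z : ℂ) :
    ‖Hmix m a j q z‖
      ≤ (2*m : ℝ) * ((2*m : ℝ))^(2*m) * ((2*m : ℝ))^(2*m) * ‖z‖ ^ (2*m - j - q) := by
  unfold Hmix
  calc ‖∑ k ∈ (Finset.Icc j (2 * m - 1)).filter (fun k => q ≤ 2 * m - k),
        a (2 * m - k) * (k.descFactorial j : ℂ) * ((2 * m - k).descFactorial q : ℂ) *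
          z ^ (k - j) * (starRingEnd ℂ z) ^ (2 * m - k - q)‖
      ≤ ∑ k ∈ (Finset.Icc j (2 * m - 1)).filter (fun k => q ≤ 2 * m - k),
        ‖a (2 * m - k) * (k.descFactorial j : ℂ) * ((2 * m - k).descFactorial q : ℂ) *
          z ^ (k - j) * (starRingEnd ℂ z) ^ (2 * m - k - q)‖ := by
        exact norm_sum_le _ _
    _ ≤ ∑ k ∈ (Finset.Icc j (2 * m - 1)).filter (fun k => q ≤ 2 * m - k),
        ((2*m : ℝ))^(2*m) * ((2*m : ℝ))^(2*m) * ‖z‖ ^ (2*m - j - q) := by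
        refine Finset.sum_le_sum fun k hk => ?_
        simp only [Finset.mem_filter, Finset.mem_Icc] at hk
        simp only [norm_mul, norm_pow, Complex.norm_natCast, Complex.norm_conj]
        have e1 : ‖z‖ ^ (k - j) * ‖z‖ ^ (2*m - k - q)
            = ‖z‖ ^ (2*m - j - q) := by
          rw [← pow_add]
          congr 1
          omega
        have hd1 : ((k.descFactorial j : ℕ) : ℝ) ≤ ((2*m:ℝ))^(2*m) := by
          calc ((k.descFactorial j : ℕ) : ℝ) ≤ ((k^j : ℕ) : ℝ) := by
                exact_mod_cast Nat.descFactorial_le_pow k j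
            _ ≤ (((2*m)^(2*m) : ℕ) : ℝ) := by
                exact_mod_cast Nat.pow_le_pow_left (by omega) j |>.trans
                  (Nat.pow_le_pow_right (by omega) (by omega))
            _ = ((2*m:ℝ))^(2*m) := by push_cast; ring
        have hd2 : (((2*m - k).descFactorial q : ℕ) : ℝ) ≤ ((2*m:ℝ))^(2*m) := by
          calc (((2*m - k).descFactorial q : ℕ) : ℝ) ≤ (((2*m - k)^q : ℕ) : ℝ) := by
                exact_mod_cast Nat.descFactorial_le_pow _ q
            _ ≤ (((2*m)^(2*m) : ℕ) : ℝ) := by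
                exact_mod_cast Nat.pow_le_pow_left (by omega) q |>.trans
                  (Nat.pow_le_pow_right (by omega) (by omega))
            _ = ((2*m:ℝ))^(2*m) := by push_cast; ring
        have hak : ‖a (2*m - k)‖ ≤ 1 := by
          refine ha (2*m - k) ?_
          simp only [Finset.mem_Icc]
          omega
        calc ‖a (2*m-k)‖ * ((k.descFactorial j : ℕ) : ℝ) * (((2*m-k).descFactorial q : ℕ) : ℝ)
              * ‖z‖ ^ (k - j) * ‖z‖ ^ (2*m - k - q)
            ≤ 1 * ((2*m:ℝ))^(2*m) * ((2*m:ℝ))^(2*m) * ‖z‖ ^ (k-j) * ‖z‖ ^ (2*m-k-q) := by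
              gcongr
          _ = ((2*m:ℝ))^(2*m) * ((2*m:ℝ))^(2*m) * (‖z‖ ^ (k-j) * ‖z‖ ^ (2*m-k-q)) := by ring
          _ = ((2*m:ℝ))^(2*m) * ((2*m:ℝ))^(2*m) * ‖z‖ ^ (2*m - j - q) := by rw [e1]
    _ ≤ (2*m : ℝ) * ((2*m : ℝ))^(2*m) * ((2*m : ℝ))^(2*m) * ‖z‖ ^ (2*m - j - q) := by
        rw [Finset.sum_const, nsmul_eq_mul]
        have hcard : (((Finset.Icc j (2 * m - 1)).filter (fun k => q ≤ 2 * m - k)).card : ℝ) ≤ (2*m : ℝ) := by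
          have h1 : ((Finset.Icc j (2 * m - 1)).filter (fun k => q ≤ 2 * m - k)).card
              ≤ (Finset.Icc j (2*m-1)).card := Finset.card_filter_le _ _
          have h2 : (Finset.Icc j (2*m-1)).card = 2*m - 1 + 1 - j := Nat.card_Icc _ _
          have : ((Finset.Icc j (2 * m - 1)).filter (fun k => q ≤ 2 * m - k)).card ≤ 2*m := by omega
          exact_mod_cast this
        have hnn : (0:ℝ) ≤ ((2*m : ℝ))^(2*m) * ((2*m : ℝ))^(2*m) * ‖z‖ ^ (2*m - j - q) := by positivity
        calc (((Finset.Icc j (2 * m - 1)).filter (fun k => q ≤ 2 * m - k)).card : ℝ)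
              * (((2*m : ℝ))^(2*m) * ((2*m : ℝ))^(2*m) * ‖z‖ ^ (2*m - j - q))
            ≤ (2*m:ℝ) * (((2*m : ℝ))^(2*m) * ((2*m : ℝ))^(2*m) * ‖z‖ ^ (2*m - j - q)) := by
              exact mul_le_mul_of_nonneg_right hcard hnn
          _ = (2*m : ℝ) * ((2*m : ℝ))^(2*m) * ((2*m : ℝ))^(2*m) * ‖z‖ ^ (2*m - j - q) := by ring

theorem rpow_inv_pow_aux (m : ℕ) (hm : 1 ≤ m) (x : ℝ) (hx : 0 ≤ x) :
    (x ^ ((1:ℝ)/(2*(m:ℝ)))) ^ (2*m) = x := by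
  rw [← Real.rpow_natCast (x ^ ((1:ℝ)/(2*(m:ℝ)))) (2*m), ← Real.rpow_mul hx]
  rw [show (1:ℝ)/(2*(m:ℝ)) * ((2*m : ℕ) : ℝ) = 1 by
    push_cast
    field_simp]
  exact Real.rpow_one x

theorem pow_rpow_inv_aux (m : ℕ) (hm : 1 ≤ m) (x : ℝ) (hx : 0 ≤ x) :
    (x ^ (2*m)) ^ ((1:ℝ)/(2*(m:ℝ))) = x := by
  rw [← Real.rpow_natCast x (2*m), ← Real.rpow_mul hx]
  rw [show ((2*m : ℕ) : ℝ) * ((1:ℝ)/(2*(m:ℝ))) = 1 by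
    push_cast
    field_simp]
  exact Real.rpow_one x

set_option maxHeartbeats 2000000 in
/-- along a sequence converging tangentially to order `2m` to the origin,
`τ(η_n) ≈ ε(η_n)^{1/2m}`, the rescaled polynomials converge to
`H_∞(w) = H(α+βw) − H(α) − 2Re Σ H_j(α)(βw)^j/j!`, `H_∞` has degree exactly `2m`, and
`M_{H_∞}` is biholomorphically equivalent to `M_H`. -/
theorem statement_14 (m : ℕ) (hm : 1 ≤ m) (a : ℕ → ℂ) (H : ℂ → ℝ)
    (hH : ∀ z : ℂ, (H z : ℂ) = Hpoly m a z)
    (hgood : GoodCoeff m a) (hsub : SubharmonicCoeff m a)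
    (hnorm : (((Finset.Icc 1 (2 * m - 1)).sup fun j =>
      Real.toNNReal (‖a j‖)) : ℝ≥0) = 1)
    (η : ℕ → ℂ × ℂ) (hη : ∀ n, η n ∈ modelM H)
    (hηlim : Filter.Tendsto η Filter.atTop (𝓝 ((0 : ℂ), (0 : ℂ))))
    (c C : ℝ) (hc : 0 < c) (hC : 0 < C)
    (hcomp : ∀ n, c * ‖(η n).1‖ ^ (2 * m) ≤ epsAt H (η n) ∧
      epsAt H (η n) ≤ C * ‖(η n).1‖ ^ (2 * m))
    (τn : ℕ → ℝ) (hτ : ∀ n, 0 < τn n ∧ HscaledNorm m a H (η n) (τn n) = 1) :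
    (∃ c' C' : ℝ, 0 < c' ∧ 0 < C' ∧ ∀ n,
      c' * epsAt H (η n) ^ ((1 : ℝ) / (2 * (m : ℝ))) ≤ τn n ∧
      τn n ≤ C' * epsAt H (η n) ^ ((1 : ℝ) / (2 * (m : ℝ)))) ∧
    (∀ (α : ℂ) (β : ℝ),
      Filter.Tendsto (fun n => (η n).1 /
          ((epsAt H (η n) ^ ((1 : ℝ) / (2 * (m : ℝ))) : ℝ) : ℂ))
        Filter.atTop (𝓝 α) →
      Filter.Tendsto (fun n => τn n / epsAt H (η n) ^ ((1 : ℝ) / (2 * (m : ℝ))))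
        Filter.atTop (𝓝 β) →
      0 < β ∧
      (∀ j q : ℕ, 1 ≤ j → 1 ≤ q → j + q ≤ 2 * m →
        Filter.Tendsto (fun n => scaledCoeff m a H (η n) (τn n) j q) Filter.atTop
          (𝓝 (((β : ℂ)) ^ (j + q) * Hmix m a j q α /
            ((j.factorial : ℂ) * (q.factorial : ℂ))))) ∧
      (let Hinf : ℂ → ℝ := fun w => H (α + (β : ℂ) * w) - H α -
         2 * (∑ j ∈ Finset.Icc 1 (2 * m - 1),
           Hhol m a j α / (j.factorial : ℂ) * ((β : ℂ) * w) ^ j).re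
       (∀ w : ℂ, Filter.Tendsto (fun n => ∑ jq ∈ coeffPairs m,
           scaledCoeff m a H (η n) (τn n) jq.1 jq.2 * w ^ jq.1 *
             (starRingEnd ℂ w) ^ jq.2)
         Filter.atTop (𝓝 ((Hinf w : ℝ) : ℂ))) ∧
       (∃ d : ℕ → ℕ → ℂ,
         (∀ w : ℂ, (Hinf w : ℂ) = ∑ jq ∈ coeffPairs m,
           d jq.1 jq.2 * w ^ jq.1 * (starRingEnd ℂ w) ^ jq.2) ∧
         ∃ j q : ℕ, 1 ≤ j ∧ 1 ≤ q ∧ j + q = 2 * m ∧ d j q ≠ 0) ∧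
       (∃ F : ℂ × ℂ → ℂ × ℂ, IsBiholoOn (modelM Hinf) (modelM H) F))) := by
  classical
  have hmne : (m:ℝ) ≠ 0 := by
    have : (0:ℝ) < m := by exact_mod_cast hm
    exact ne_of_gt this
  have hεpos : ∀ n, 0 < epsAt H (η n) := by
    intro n
    have h1 := hη n
    simp only [modelM, Set.mem_setOf_eq] at h1
    exact abs_pos.2 (ne_of_lt h1)
  have hspos : ∀ n, 0 < epsAt H (η n) ^ ((1:ℝ)/(2*(m:ℝ))) :=
    fun n => Real.rpow_pos_of_pos (hεpos n) _
  have hs2m : ∀ n, (epsAt H (η n) ^ ((1:ℝ)/(2*(m:ℝ)))) ^ (2*m) = epsAt H (η n) :=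
    fun n => rpow_inv_pow_aux m hm _ (hεpos n).le
  -- norm facts about a
  have hanorm : ∀ k ∈ Finset.Icc 1 (2*m-1), ‖a k‖ ≤ 1 := by
    intro k hk
    have h1 : Real.toNNReal (‖a k‖)
        ≤ (Finset.Icc 1 (2*m-1)).sup (fun j => Real.toNNReal (‖a j‖)) :=
      Finset.le_sup (f := fun j => Real.toNNReal (‖a j‖)) hk
    rw [hnorm] at h1
    have h2 : ((Real.toNNReal (‖a k‖) : ℝ≥0) : ℝ) ≤ ((1:ℝ≥0):ℝ) := by
      exact_mod_cast h1
    rwa [Real.coe_toNNReal _ (norm_nonneg _), NNReal.coe_one] at h2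
  obtain ⟨j0, hj0mem, hj0⟩ : ∃ j0 ∈ Finset.Icc 1 (2*m-1), ‖a j0‖ = 1 := by
    obtain ⟨j0, hj0s, he⟩ := Finset.exists_mem_eq_sup (Finset.Icc 1 (2*m-1))
      ⟨1, by simp only [Finset.mem_Icc]; omega⟩ (fun j => Real.toNNReal (‖a j‖))
    refine ⟨j0, hj0s, ?_⟩
    have h3 : Real.toNNReal (‖a j0‖) = 1 := by rw [← he, hnorm]
    have h4 := congrArg (fun x : ℝ≥0 => (x:ℝ)) h3
    simpa [Real.coe_toNNReal _ (norm_nonneg _)] using h4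
  have hj0mem' := hj0mem
  simp only [Finset.mem_Icc] at hj0mem'
  have hsup1 : ∀ n, ((coeffPairs m).sup fun jq =>
      Real.toNNReal (‖scaledCoeff m a H (η n) (τn n) jq.1 jq.2‖)) = 1 := by
    intro n
    have h1 := (hτ n).2
    unfold HscaledNorm at h1
    exact_mod_cast h1
  have hpairmem : (2*m - j0, j0) ∈ coeffPairs m := by
    simp only [coeffPairs, Finset.mem_filter, Finset.mem_product, Finset.mem_Icc]
    omega
  -- upper bound : τn n ≤ ε ^ (1/2m)
  have hupper : ∀ n, τn n ≤ epsAt H (η n) ^ ((1:ℝ)/(2*(m:ℝ))) := by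
    intro n
    have hτn := (hτ n).1
    have hle : Real.toNNReal (‖scaledCoeff m a H (η n) (τn n) (2*m - j0) j0‖) ≤ 1 := by
      have h8 : Real.toNNReal (‖scaledCoeff m a H (η n) (τn n) (2*m - j0) j0‖)
          ≤ ((coeffPairs m).sup fun jq =>
            Real.toNNReal (‖scaledCoeff m a H (η n) (τn n) jq.1 jq.2‖)) := by
        simpa using Finset.le_sup
          (f := fun jq : ℕ × ℕ => Real.toNNReal (‖scaledCoeff m a H (η n) (τn n) jq.1 jq.2‖))
          hpairmem
      rwa [hsup1 n] at h8
    have hval : ‖scaledCoeff m a H (η n) (τn n) (2*m - j0) j0‖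
        = (τn n)^(2*m) / epsAt H (η n) := by
      unfold scaledCoeff
      rw [hmix_top m a j0 hj0mem hm]
      rw [show (2*m - j0) + j0 = 2*m from by omega]
      simp only [norm_div, norm_mul, norm_pow, Complex.norm_natCast, Complex.norm_real, Real.norm_eq_abs, hj0,
        one_mul]
      rw [abs_of_pos hτn, abs_of_pos (hεpos n)]
      have f1 : ((2*m - j0).factorial : ℝ) ≠ 0 := by exact_mod_cast (2*m - j0).factorial_ne_zero
      have f2 : ((j0).factorial : ℝ) ≠ 0 := by exact_mod_cast (j0).factorial_ne_zero
      exact mul_div_mul_left _ _ (mul_ne_zero f1 f2)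
    have hle2 : (τn n)^(2*m) / epsAt H (η n) ≤ 1 := by
      have h5 : ‖scaledCoeff m a H (η n) (τn n) (2*m - j0) j0‖ ≤ 1 := by
        have h7 := Real.toNNReal_le_iff_le_coe.1 hle
        rwa [NNReal.coe_one] at h7
      rwa [hval] at h5
    have hle3 : (τn n)^(2*m) ≤ epsAt H (η n) := (div_le_one (hεpos n)).1 hle2
    calc τn n = ((τn n)^(2*m)) ^ ((1:ℝ)/(2*(m:ℝ))) := (pow_rpow_inv_aux m hm _ hτn.le).symm
      _ ≤ epsAt H (η n) ^ ((1:ℝ)/(2*(m:ℝ))) :=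
          Real.rpow_le_rpow (by positivity) hle3 (by positivity)
  -- constants for the lower bound
  set B : ℝ := (2*m : ℝ) * ((2*m : ℝ))^(2*m) * ((2*m : ℝ))^(2*m) with hBdef
  have hBpos : 0 < B := by positivity
  set κ : ℝ := c⁻¹ ^ ((1:ℝ)/(2*(m:ℝ))) with hκdef
  have hκpos : 0 < κ := Real.rpow_pos_of_pos (inv_pos.2 hc) _
  set D : ℝ := max B 1 * (max κ 1)^(2*m) with hDdef
  have hD1 : 1 ≤ D := by
    have h1 : (1:ℝ) ≤ max B 1 := le_max_right _ _
    have h2 : (1:ℝ) ≤ (max κ 1)^(2*m) := one_le_pow₀ (le_max_right _ _)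
    nlinarith
  have hDpos : 0 < D := lt_of_lt_of_le one_pos hD1
  have hBκD : ∀ e : ℕ, e ≤ 2*m → B * κ ^ e ≤ D := by
    intro e he
    have h1 : B ≤ max B 1 := le_max_left _ _
    have h2 : κ ^ e ≤ (max κ 1)^e := pow_le_pow_left₀ hκpos.le (le_max_left _ _) e
    have h3 : (max κ 1)^e ≤ (max κ 1)^(2*m) :=
      pow_le_pow_right₀ (le_max_right _ _) he
    rw [hDdef]
    have h4 : (0:ℝ) ≤ κ ^ e := by positivity
    nlinarith
  -- |η₁| ≤ s * κ
  have hη1le : ∀ n, ‖(η n).1‖ ≤ epsAt H (η n) ^ ((1:ℝ)/(2*(m:ℝ))) * κ := by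
    intro n
    have h1 : ‖(η n).1‖ ^ (2*m) ≤ epsAt H (η n) * c⁻¹ := by
      have := (hcomp n).1
      rw [mul_comm] at this
      calc ‖(η n).1‖ ^ (2*m) = ‖(η n).1‖ ^ (2*m) * c * c⁻¹ := by
            field_simp
        _ ≤ epsAt H (η n) * c⁻¹ := by
            apply mul_le_mul_of_nonneg_right this (inv_nonneg.2 hc.le)
    calc ‖(η n).1‖ = (‖(η n).1‖ ^ (2*m)) ^ ((1:ℝ)/(2*(m:ℝ))) :=
          (pow_rpow_inv_aux m hm _ (norm_nonneg _)).symm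
      _ ≤ (epsAt H (η n) * c⁻¹) ^ ((1:ℝ)/(2*(m:ℝ))) :=
          Real.rpow_le_rpow (by positivity) h1 (by positivity)
      _ = epsAt H (η n) ^ ((1:ℝ)/(2*(m:ℝ))) * κ := by
          rw [Real.mul_rpow (hεpos n).le (inv_nonneg.2 hc.le), hκdef]
  -- lower bound : D⁻¹ * s ≤ τn n
  have hlower : ∀ n, D⁻¹ * epsAt H (η n) ^ ((1:ℝ)/(2*(m:ℝ))) ≤ τn n := by
    intro n
    have hτn := (hτ n).1
    obtain ⟨jq, hjqmem, hjqsup⟩ := Finset.exists_mem_eq_sup (coeffPairs m)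
      ⟨(1,1), by simp only [coeffPairs, Finset.mem_filter, Finset.mem_product, Finset.mem_Icc]; omega⟩
      (fun jq => Real.toNNReal (‖scaledCoeff m a H (η n) (τn n) jq.1 jq.2‖))
    have hjq1 : 1 ≤ jq.1 ∧ 1 ≤ jq.2 ∧ jq.1 + jq.2 ≤ 2*m := by
      have := hjqmem
      simp only [coeffPairs, Finset.mem_filter, Finset.mem_product, Finset.mem_Icc] at this
      omega
    have habs1 : ‖scaledCoeff m a H (η n) (τn n) jq.1 jq.2‖ = 1 := by
      have h1 : Real.toNNReal (‖scaledCoeff m a H (η n) (τn n) jq.1 jq.2‖) = 1 := by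
        rw [← hjqsup, hsup1 n]
      have h2 := congrArg (fun x : ℝ≥0 => (x:ℝ)) h1
      simpa [Real.coe_toNNReal _ (norm_nonneg _)] using h2
    -- extract: |Hmix| * τ^(j+q) = j! q! ε
    have hfact1 : (0:ℝ) < (jq.1.factorial : ℝ) := by exact_mod_cast jq.1.factorial_pos
    have hfact2 : (0:ℝ) < (jq.2.factorial : ℝ) := by exact_mod_cast jq.2.factorial_pos
    have heq : ‖Hmix m a jq.1 jq.2 (η n).1‖ * (τn n)^(jq.1 + jq.2)
        = (jq.1.factorial : ℝ) * (jq.2.factorial : ℝ) * epsAt H (η n) := by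
      have h3 : ‖scaledCoeff m a H (η n) (τn n) jq.1 jq.2‖
          = ‖Hmix m a jq.1 jq.2 (η n).1‖ * (τn n)^(jq.1 + jq.2)
            / ((jq.1.factorial : ℝ) * (jq.2.factorial : ℝ) * epsAt H (η n)) := by
        unfold scaledCoeff
        simp only [norm_div, norm_mul, norm_pow, Complex.norm_natCast, Complex.norm_real, Real.norm_eq_abs]
        rw [abs_of_pos hτn, abs_of_pos (hεpos n)]
      rw [h3, div_eq_one_iff_eq (mul_ne_zero (mul_ne_zero (ne_of_gt hfact1) (ne_of_gt hfact2)) (ne_of_gt (hεpos n)))] at habs1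
      exact habs1
    have hεle : epsAt H (η n) ≤ ‖Hmix m a jq.1 jq.2 (η n).1‖ * (τn n)^(jq.1 + jq.2) := by
      rw [heq]
      have : (1:ℝ) ≤ (jq.1.factorial : ℝ) * (jq.2.factorial : ℝ) := by
        have g1 : (1:ℕ) ≤ jq.1.factorial * jq.2.factorial :=
          Nat.one_le_iff_ne_zero.2 (Nat.mul_ne_zero jq.1.factorial_ne_zero jq.2.factorial_ne_zero)
        exact_mod_cast g1
      nlinarith [(hεpos n)]
    set s := epsAt H (η n) ^ ((1:ℝ)/(2*(m:ℝ))) with hsdef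
    have hsposn : 0 < s := hspos n
    set e := 2*m - jq.1 - jq.2 with hedef
    have hsum : e + (jq.1 + jq.2) = 2*m := by omega
    have hbd := hmix_bound m a jq.1 jq.2 hjq1.1 hanorm (η n).1
    have hchain : epsAt H (η n) ≤ B * (s * κ)^e * (τn n)^(jq.1 + jq.2) := by
      calc epsAt H (η n) ≤ ‖Hmix m a jq.1 jq.2 (η n).1‖ * (τn n)^(jq.1 + jq.2) := hεle
        _ ≤ (B * ‖(η n).1‖ ^ e) * (τn n)^(jq.1 + jq.2) := by
            apply mul_le_mul_of_nonneg_right _ (by positivity)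
            rw [hBdef]
            exact hbd
        _ ≤ (B * (s * κ)^e) * (τn n)^(jq.1 + jq.2) := by
            apply mul_le_mul_of_nonneg_right _ (by positivity)
            apply mul_le_mul_of_nonneg_left _ hBpos.le
            exact pow_le_pow_left₀ (norm_nonneg _) (hη1le n) e
    have hsplit : epsAt H (η n) = s^e * s^(jq.1 + jq.2) := by
      rw [← pow_add, hsum, hs2m n]
    have h6 : s^(jq.1 + jq.2) ≤ (B * κ^e) * (τn n)^(jq.1 + jq.2) := by
      have h7 : s^e * s^(jq.1 + jq.2) ≤ s^e * ((B * κ^e) * (τn n)^(jq.1 + jq.2)) := by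
        rw [← hsplit]
        calc epsAt H (η n) ≤ B * (s * κ)^e * (τn n)^(jq.1 + jq.2) := hchain
          _ = s^e * ((B * κ^e) * (τn n)^(jq.1 + jq.2)) := by rw [mul_pow]; ring
      exact le_of_mul_le_mul_left h7 (by positivity)
    have h8 : s^(jq.1 + jq.2) ≤ (D * τn n)^(jq.1 + jq.2) := by
      calc s^(jq.1 + jq.2) ≤ (B * κ^e) * (τn n)^(jq.1 + jq.2) := h6
        _ ≤ D * (τn n)^(jq.1 + jq.2) := by
            apply mul_le_mul_of_nonneg_right (hBκD e (by omega)) (by positivity)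
        _ ≤ D^(jq.1 + jq.2) * (τn n)^(jq.1 + jq.2) := by
            apply mul_le_mul_of_nonneg_right _ (by positivity)
            exact le_self_pow₀ hD1 (by omega)
        _ = (D * τn n)^(jq.1 + jq.2) := (mul_pow _ _ _).symm
    have h9 : s ≤ D * τn n :=
      le_of_pow_le_pow_left₀ (by omega) (by positivity) h8
    rw [inv_mul_le_iff₀ hDpos]
    exact h9
  refine ⟨⟨D⁻¹, 1, inv_pos.2 hDpos, one_pos, fun n => ⟨hlower n, by
    rw [one_mul]; exact hupper n⟩⟩, ?_⟩
  intro α β hα hβ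
  have hβpos : 0 < β := by
    have hge : ∀ n, D⁻¹ ≤ τn n / epsAt H (η n) ^ ((1:ℝ)/(2*(m:ℝ))) := by
      intro n
      rw [le_div_iff₀ (hspos n)]
      exact hlower n
    have h1 := ge_of_tendsto' hβ hge
    exact lt_of_lt_of_le (inv_pos.2 hDpos) h1
  have hβC : ((β:ℝ):ℂ) ≠ 0 := Complex.ofReal_ne_zero.2 (ne_of_gt hβpos)
  -- coefficient convergence
  have hconv : ∀ j q : ℕ, 1 ≤ j → 1 ≤ q → j + q ≤ 2*m →
      Filter.Tendsto (fun n => scaledCoeff m a H (η n) (τn n) j q) Filter.atTop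
        (𝓝 (((β:ℂ)) ^ (j+q) * Hmix m a j q α / ((j.factorial : ℂ) * (q.factorial : ℂ)))) := by
    intro j q hj hq hjq
    have hrew : ∀ n, scaledCoeff m a H (η n) (τn n) j q
        = ((τn n / epsAt H (η n) ^ ((1:ℝ)/(2*(m:ℝ))) : ℝ) : ℂ) ^ (j+q)
          * Hmix m a j q ((η n).1 / ((epsAt H (η n) ^ ((1:ℝ)/(2*(m:ℝ))) : ℝ) : ℂ))
          / ((j.factorial : ℂ) * (q.factorial : ℂ)) := by
      intro n
      have ht : 0 < epsAt H (η n) ^ ((1:ℝ)/(2*(m:ℝ))) := hspos n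
      set t : ℝ := epsAt H (η n) ^ ((1:ℝ)/(2*(m:ℝ))) with htdef
      have h2m : t ^ (2*m) = epsAt H (η n) := hs2m n
      have htC : ((t:ℝ):ℂ) ≠ 0 := Complex.ofReal_ne_zero.2 (ne_of_gt ht)
      unfold scaledCoeff
      rw [show Hmix m a j q (η n).1 = Hmix m a j q ((t:ℂ) * ((η n).1 / (t:ℂ))) from by
        rw [mul_div_cancel₀ _ htC]]
      rw [hmix_homog]
      have hεC : ((epsAt H (η n) : ℝ) : ℂ) = ((t:ℝ):ℂ)^(2*m) := by
        rw [← h2m]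
        push_cast
        ring
      rw [hεC]
      rw [show ((t:ℝ):ℂ)^(2*m) = ((t:ℝ):ℂ)^(2*m - j - q) * ((t:ℝ):ℂ)^(j+q) from by
        rw [← pow_add]; congr 1; omega]
      rw [Complex.ofReal_div, div_pow]
      have hf1 : ((j.factorial : ℂ)) ≠ 0 := by exact_mod_cast j.factorial_ne_zero
      have hf2 : ((q.factorial : ℂ)) ≠ 0 := by exact_mod_cast q.factorial_ne_zero
      field_simp
    have h1 : Filter.Tendsto (fun n => ((τn n / epsAt H (η n) ^ ((1:ℝ)/(2*(m:ℝ))) : ℝ) : ℂ))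
        Filter.atTop (𝓝 ((β:ℝ):ℂ)) := (Complex.continuous_ofReal.tendsto β).comp hβ
    have h2 : Filter.Tendsto
        (fun n => Hmix m a j q ((η n).1 / ((epsAt H (η n) ^ ((1:ℝ)/(2*(m:ℝ))) : ℝ) : ℂ)))
        Filter.atTop (𝓝 (Hmix m a j q α)) := ((hmix_continuous m a j q).tendsto α).comp hα
    have h3 := ((h1.pow (j+q)).mul h2).div_const ((j.factorial:ℂ) * (q.factorial:ℂ))
    exact Filter.Tendsto.congr (fun n => (hrew n).symm) h3
  refine ⟨hβpos, hconv, ?_⟩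
  intro Hinf
  -- the key identity for Hinf
  have hHinfC : ∀ w : ℂ, ((Hinf w : ℝ) : ℂ)
      = ∑ jq ∈ coeffPairs m,
        ((β:ℂ)^(jq.1+jq.2) * Hmix m a jq.1 jq.2 α / ((jq.1.factorial:ℂ) * (jq.2.factorial:ℂ)))
          * w^jq.1 * (starRingEnd ℂ w)^jq.2 := by
    intro w
    have hd : Hinf w = H (α + (β:ℂ)*w) - H α -
        2 * (∑ j ∈ Finset.Icc 1 (2*m-1),
          Hhol m a j α / (j.factorial:ℂ) * ((β:ℂ)*w)^j).re := rfl
    rw [hd]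
    push_cast
    rw [hH, hH]
    have hmaster := master_identity m hm a hgood.1 α ((β:ℂ)*w)
    set S := ∑ j ∈ Finset.Icc 1 (2*m-1), Hhol m a j α / (j.factorial:ℂ) * ((β:ℂ)*w)^j with hSdef
    have hQ : ∑ jq ∈ coeffPairs m,
        Hmix m a jq.1 jq.2 α / ((jq.1.factorial:ℂ)*(jq.2.factorial:ℂ))
          * ((β:ℂ)*w)^jq.1 * (starRingEnd ℂ ((β:ℂ)*w))^jq.2
        = ∑ jq ∈ coeffPairs m,
        ((β:ℂ)^(jq.1+jq.2) * Hmix m a jq.1 jq.2 α / ((jq.1.factorial:ℂ) * (jq.2.factorial:ℂ)))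
          * w^jq.1 * (starRingEnd ℂ w)^jq.2 := by
      refine Finset.sum_congr rfl fun jq _ => ?_
      rw [map_mul, Complex.conj_ofReal, mul_pow, mul_pow, pow_add]
      ring
    rw [hmaster, ← hQ]
    rw [show ((S.re : ℝ):ℂ) = (S + starRingEnd ℂ S)/2 from by
      rw [Complex.add_conj]; push_cast; ring]
    ring
  refine ⟨?_, ?_, ?_⟩
  · -- pointwise convergence of rescaled polynomials
    intro w
    rw [show ((Hinf w : ℝ):ℂ) = _ from hHinfC w]
    refine tendsto_finset_sum _ fun jq hjq => ?_
    have hmem : 1 ≤ jq.1 ∧ 1 ≤ jq.2 ∧ jq.1 + jq.2 ≤ 2*m := by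
      simp only [coeffPairs, Finset.mem_filter, Finset.mem_product, Finset.mem_Icc] at hjq
      omega
    exact ((hconv jq.1 jq.2 hmem.1 hmem.2.1 hmem.2.2).mul_const _).mul_const _
  · -- degree exactly 2m
    refine ⟨fun j q => (β:ℂ)^(j+q) * Hmix m a j q α / ((j.factorial:ℂ)*(q.factorial:ℂ)),
      hHinfC, 2*m - j0, j0, by omega, hj0mem'.1, by omega, ?_⟩
    dsimp only
    rw [hmix_top m a j0 hj0mem hm α]
    have ha0 : a j0 ≠ 0 := by
      intro h0
      rw [h0] at hj0
      simp at hj0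
    have f1 : (((2*m - j0).factorial : ℕ) : ℂ) ≠ 0 := by exact_mod_cast (2*m - j0).factorial_ne_zero
    have f2 : ((j0.factorial : ℕ) : ℂ) ≠ 0 := by exact_mod_cast j0.factorial_ne_zero
    exact div_ne_zero
      (mul_ne_zero (pow_ne_zero _ hβC) (mul_ne_zero (mul_ne_zero ha0 f1) f2))
      (mul_ne_zero f1 f2)
  · -- biholomorphism
    set P : ℂ → ℂ := fun u => ((H α : ℝ):ℂ)
      + 2 * ∑ j ∈ Finset.Icc 1 (2*m-1), Hhol m a j α / (j.factorial:ℂ) * u^j with hPdef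
    have hPdiff : Differentiable ℂ P := by
      rw [hPdef]
      refine (differentiable_const _).add ?_
      refine (differentiable_const (2:ℂ)).mul ?_
      refine Differentiable.fun_sum fun j _ => ?_
      exact (differentiable_const _).mul (differentiable_pow j)
    have hPre : ∀ u : ℂ, (P u).re
        = H α + (2 * (∑ j ∈ Finset.Icc 1 (2*m-1), Hhol m a j α / (j.factorial:ℂ) * u^j).re) := by
      intro u
      rw [hPdef]
      simp [Complex.add_re, Complex.mul_re]
    have hHinfd : ∀ w : ℂ, Hinf w = H (α + (β:ℂ)*w) - H α -
        2 * (∑ j ∈ Finset.Icc 1 (2*m-1),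
          Hhol m a j α / (j.factorial:ℂ) * ((β:ℂ)*w)^j).re := fun w => rfl
    refine ⟨fun z => (α + (β:ℂ) * z.1, z.2 - P ((β:ℂ) * z.1)), ?_, ?_,
      fun z => ((z.1 - α) / (β:ℂ), z.2 + P (z.1 - α)), ?_, ?_, ?_, ?_⟩
    · -- F differentiable
      refine Differentiable.differentiableOn ?_
      refine Differentiable.prodMk ?_ ?_
      · exact (differentiable_const α).add ((differentiable_const _).mul differentiable_fst)
      · exact differentiable_snd.sub (hPdiff.comp ((differentiable_const _).mul differentiable_fst))
    · -- F maps to modelM H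
      intro z hz
      simp only [modelM, Set.mem_setOf_eq] at hz ⊢
      rw [Complex.sub_re, hPre]
      rw [hHinfd z.1] at hz
      linarith
    · -- G differentiable
      refine Differentiable.differentiableOn ?_
      refine Differentiable.prodMk ?_ ?_
      · have : Differentiable ℂ (fun z : ℂ × ℂ => (z.1 - α) * ((β:ℂ))⁻¹) :=
          (differentiable_fst.sub (differentiable_const α)).mul (differentiable_const _)
        simpa only [div_eq_mul_inv] using this
      · exact differentiable_snd.add (hPdiff.comp (differentiable_fst.sub (differentiable_const α)))
    · -- G maps to modelM Hinf
      intro z hz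
      simp only [modelM, Set.mem_setOf_eq] at hz ⊢
      rw [Complex.add_re, hPre]
      rw [hHinfd ((z.1 - α)/(β:ℂ))]
      rw [mul_div_cancel₀ _ hβC, add_sub_cancel]
      linarith
    · -- G ∘ F = id
      intro z _
      dsimp only
      rw [add_sub_cancel_left, mul_div_cancel_left₀ _ hβC, sub_add_cancel]
    · -- F ∘ G = id
      intro z _
      dsimp only
      rw [mul_div_cancel₀ _ hβC]
      have h1 : α + (z.1 - α) = z.1 := by ring
      have h2 : z.2 + P (z.1 - α) - P (z.1 - α) = z.2 := by ring
      rw [h1, h2]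

end
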